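/- Let L ≥ 1, α ∈ (0,1), and Δ = (α^{1/2} − α)/L. Suppose ξ = {ξ_t}_{t=0}^T is a stochastic process with finite support, the deterministic matrix pair (A,C) is (L,α)-detectable (there exists K with ‖K‖ ≤ L such that A − KC is (L,α)-stable), and the random matrices satisfy ‖A − A(ξ_t)‖ ≤ Δ/2 almost surely for t ∈ {1,…,T} and ‖C − C(ξ_t)‖ ≤ Δ/(2L) almost surely for t ∈ {0,…,T−1}. Then the random pair ({A(ξ_t)}_{t=1}^T, {C(ξ_t)}_{t=0}^{T−1}) is (L, α^{1/2})-detectable: there exist almost surely L-bounded matrices K_t(ξ_{0:t}), t ∈ {1,…,T}, such that ‖∏_{t=t'+1}^{t''} (A(ξ_t) − K_t(ξ_{0:t})C(ξ_{t−1}))‖ ≤ L α^{(t''−t')/2} almost surely for all 0 ≤ t' < t'' ≤ T. -/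

import Mathlib

open Matrix BigOperators

/-- Operator 2-norm of a real matrix, i.e. the norm of the induced linear map between
Euclidean spaces. -/
noncomputable def opNorm {m n : Type*} [Fintype m] [Fintype n] [DecidableEq n]
    (A : Matrix m n ℝ) : ℝ :=
  ‖LinearMap.toContinuousLinearMap (Matrix.toEuclideanLin A)‖

/-- `mprod Φ a k = Φ (a+k-1) * ⋯ * Φ (a+1) * Φ a`: the ordered product of `k` factors
starting at index `a` (larger indices on the left). -/
def mprod {n : ℕ} (Φ : ℕ → Matrix (Fin n) (Fin n) ℝ) (a : ℕ) : ℕ → Matrix (Fin n) (Fin n) ℝ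
  | 0 => 1
  | k + 1 => Φ (a + k) * mprod Φ a k

/-- Squared Euclidean norm of a vector. -/
noncomputable def sqnorm {m : Type*} [Fintype m] (v : m → ℝ) : ℝ := ∑ i, v i ^ 2

/-- A discrete-time stochastic process with finitely many scenarios, each of positive
probability (so “almost surely” means “for every scenario”).  `ξ t s` is the value of the
process at time `t` in scenario `s`. -/
structure FiniteProcess (Ξ : Type) where
  S : Type
  [finS : Fintype S]
  P : S → ℝ
  P_pos : ∀ s, 0 < P s
  P_sum : ∑ s, P s = 1
  ξ : ℕ → S → Ξ

attribute [instance] FiniteProcess.finS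

namespace FiniteProcess

variable {Ξ : Type} (proc : FiniteProcess Ξ)

/-- Two scenarios have the same past `ξ₀,…,ξ_t`. -/
def PrefixEq (t : ℕ) (s s' : proc.S) : Prop := ∀ τ ≤ t, proc.ξ τ s = proc.ξ τ s'

/-- `f` depends only on `ξ₀,…,ξ_t` (nonanticipativity). -/
def Adapted (t : ℕ) {β : Type*} (f : proc.S → β) : Prop :=
  ∀ s s', proc.PrefixEq t s s' → f s = f s'

open Classical in
/-- Conditional expectation of `f` given `ξ₀,…,ξ_t` equal to the prefix of scenario `sb`. -/
noncomputable def cexp (t : ℕ) (sb : proc.S) (f : proc.S → ℝ) : ℝ :=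
  (∑ s, if proc.PrefixEq t s sb then proc.P s * f s else 0) /
    (∑ s, if proc.PrefixEq t s sb then proc.P s else 0)

open Classical in
/-- Probability of an event. -/
noncomputable def prob (E : proc.S → Prop) : ℝ := ∑ s, if E s then proc.P s else 0

end FiniteProcess

open scoped Matrix.Norms.L2Operator

lemma opNorm_eq_norm {m n : Type*} [Fintype m] [Fintype n] [DecidableEq n]
    (A : Matrix m n ℝ) : opNorm A = ‖A‖ := rfl

lemma mprod_expand {n : ℕ} (Φ : Matrix (Fin n) (Fin n) ℝ) (E : ℕ → Matrix (Fin n) (Fin n) ℝ)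
    (a : ℕ) : ∀ k, mprod (fun t => Φ + E t) a k
      = Φ ^ k + ∑ j ∈ Finset.range k,
          Φ ^ (k - 1 - j) * E (a + j) * mprod (fun t => Φ + E t) a j := by
  intro k
  induction k with
  | zero => simp [mprod]
  | succ k ih =>
      have : mprod (fun t => Φ + E t) a (k + 1)
          = (Φ + E (a + k)) * mprod (fun t => Φ + E t) a k := rfl
      rw [this, add_mul]
      nth_rewrite 1 [ih]
      rw [Finset.sum_range_succ]
      have h1 : ∀ j ∈ Finset.range k,
          Φ * (Φ ^ (k - 1 - j) * E (a + j) * mprod (fun t => Φ + E t) a j)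
            = Φ ^ (k + 1 - 1 - j) * E (a + j) * mprod (fun t => Φ + E t) a j := by
        intro j hj
        have hj' : j < k := Finset.mem_range.mp hj
        have : k + 1 - 1 - j = (k - 1 - j) + 1 := by omega
        rw [this, pow_succ']
        noncomm_ring
      rw [mul_add, Finset.mul_sum, Finset.sum_congr rfl h1]
      have : k + 1 - 1 - k = 0 := by omega
      rw [this, pow_zero, pow_succ', one_mul]
      abel

lemma mprod_bound {n : ℕ} (Φ : Matrix (Fin n) (Fin n) ℝ) (E : ℕ → Matrix (Fin n) (Fin n) ℝ)
    (a : ℕ) (L α Δ : ℝ) (hL : 1 ≤ L) (hα : 0 ≤ α) (hΔ : 0 ≤ Δ)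
    (hΦ : ∀ t, ‖Φ ^ t‖ ≤ L * α ^ t) :
    ∀ k, (∀ j < k, ‖E (a + j)‖ ≤ Δ) →
      ‖mprod (fun t => Φ + E t) a k‖ ≤ L * (α + L * Δ) ^ k := by
  have hL0 : (0:ℝ) < L := lt_of_lt_of_le one_pos hL
  set β := α + L * Δ with hβdef
  have hβα : β - α = L * Δ := by ring
  have hβ0 : 0 ≤ β := by positivity
  intro k
  induction k using Nat.strong_induction_on with
  | _ k ih =>
    intro hE
    rw [mprod_expand]
    calc ‖Φ ^ k + ∑ j ∈ Finset.range k,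
            Φ ^ (k - 1 - j) * E (a + j) * mprod (fun t => Φ + E t) a j‖
        ≤ ‖Φ ^ k‖ + ∑ j ∈ Finset.range k,
            ‖Φ ^ (k - 1 - j) * E (a + j) * mprod (fun t => Φ + E t) a j‖ :=
          (norm_add_le _ _).trans (by gcongr; exact norm_sum_le _ _)
      _ ≤ L * α ^ k + ∑ j ∈ Finset.range k,
            L * α ^ (k - 1 - j) * Δ * (L * β ^ j) := by
          refine add_le_add (hΦ k) (Finset.sum_le_sum fun j hj => ?_)
          have hjk : j < k := Finset.mem_range.mp hj
          calc ‖Φ ^ (k - 1 - j) * E (a + j) * mprod (fun t => Φ + E t) a j‖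
              ≤ ‖Φ ^ (k - 1 - j)‖ * ‖E (a + j)‖ * ‖mprod (fun t => Φ + E t) a j‖ :=
                (norm_mul_le _ _).trans (by gcongr; exact norm_mul_le _ _)
            _ ≤ L * α ^ (k - 1 - j) * Δ * (L * β ^ j) := by
                have h1 := hΦ (k - 1 - j)
                have h2 := hE j hjk
                have h3 := ih j hjk (fun i hi => hE i (hi.trans hjk))
                gcongr
      _ = L * β ^ k := by
          have hgeom : (∑ j ∈ Finset.range k, β ^ j * α ^ (k - 1 - j)) * (β - α)
              = β ^ k - α ^ k := geom_sum₂_mul β α k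
          have hsum : ∑ j ∈ Finset.range k, L * α ^ (k - 1 - j) * Δ * (L * β ^ j)
              = L * ((∑ j ∈ Finset.range k, β ^ j * α ^ (k - 1 - j)) * (β - α)) := by
            rw [Finset.sum_mul, Finset.mul_sum]
            exact Finset.sum_congr rfl fun j _ => by rw [hβα]; ring
          rw [hsum, hgeom]; ring

/-- Proposition `just`, part (c).  Let `L ≥ 1`, `α ∈ (0,1)`,
`Δ = (√α − α)/L`.  If the deterministic pair `(A,C)` is `(L,α)`-detectable and the random
matrices satisfy `‖A − A(ξ_t)‖ ≤ Δ/2` a.s. for `t ∈ {1,…,T}` and `‖C − C(ξ_t)‖ ≤ Δ/(2L)`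
a.s. for `t ∈ {0,…,T−1}`, then `({A(ξ_t)},{C(ξ_t)})` is `(L,√α)`-detectable:
there are a.s. `L`-bounded adapted matrices `K_t(ξ_{0:t})`, `t ∈ {1,…,T}`, such that
`‖∏_{t=t'+1}^{t''}(A(ξ_t) − K_t(ξ_{0:t})C(ξ_{t−1}))‖ ≤ L α^{(t''−t')/2}` a.s. for all
`0 ≤ t' < t'' ≤ T`. -/
theorem stochastic_detectability_of_perturbed_detectable
    {T nx ny : ℕ} {Ξ : Type} (proc : FiniteProcess Ξ)
    (L α : ℝ) (hL : 1 ≤ L) (hα0 : 0 < α) (hα1 : α < 1)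
    (A : Matrix (Fin nx) (Fin nx) ℝ) (C : Matrix (Fin ny) (Fin nx) ℝ)
    (Af : Ξ → Matrix (Fin nx) (Fin nx) ℝ) (Cf : Ξ → Matrix (Fin ny) (Fin nx) ℝ)
    (hdetectable : ∃ K : Matrix (Fin nx) (Fin ny) ℝ, opNorm K ≤ L ∧
      ∀ t : ℕ, opNorm ((A - K * C) ^ t) ≤ L * α ^ t)
    (hcloseA : ∀ (s : proc.S) (t : ℕ), 1 ≤ t → t ≤ T →
      opNorm (A - Af (proc.ξ t s)) ≤ (Real.sqrt α - α) / L / 2)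
    (hcloseC : ∀ (s : proc.S) (t : ℕ), t ≤ T - 1 →
      opNorm (C - Cf (proc.ξ t s)) ≤ (Real.sqrt α - α) / L / (2 * L)) :
    ∃ K : ℕ → proc.S → Matrix (Fin nx) (Fin ny) ℝ,
      (∀ t, 1 ≤ t → t ≤ T → proc.Adapted t (K t)) ∧
      (∀ (t : ℕ) (s : proc.S), 1 ≤ t → t ≤ T → opNorm (K t s) ≤ L) ∧
      ∀ (s : proc.S) (t' k : ℕ), 1 ≤ k → t' + k ≤ T →
        opNorm (mprod (fun t => Af (proc.ξ t s) - K t s * Cf (proc.ξ (t - 1) s)) (t' + 1) k)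
          ≤ L * Real.sqrt (α ^ k) := by
  obtain ⟨K, hKnorm, hKpow⟩ := hdetectable
  have hL0 : (0:ℝ) < L := lt_of_lt_of_le one_pos hL
  have hαs : α ≤ Real.sqrt α := by
    have h2 : α ^ 2 ≤ α := by nlinarith
    have h3 := Real.sqrt_le_sqrt h2
    rwa [Real.sqrt_sq hα0.le] at h3
  set Δ : ℝ := (Real.sqrt α - α) / L with hΔdef
  have hΔ0 : 0 ≤ Δ := div_nonneg (by linarith) hL0.le
  have hLΔ : L * Δ = Real.sqrt α - α := by
    rw [hΔdef]; field_simp [hL0.ne']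
  refine ⟨fun _ _ => K, fun t _ _ s s' _ => rfl, fun t s _ _ => hKnorm, ?_⟩
  intro s t' k hk hT
  set Φ : Matrix (Fin nx) (Fin nx) ℝ := A - K * C with hΦdef
  set E : ℕ → Matrix (Fin nx) (Fin nx) ℝ :=
    fun t => (Af (proc.ξ t s) - K * Cf (proc.ξ (t - 1) s)) - Φ with hEdef
  have hfun : (fun t => Af (proc.ξ t s) - K * Cf (proc.ξ (t - 1) s))
      = fun t => Φ + E t := by
    funext t; rw [hEdef]; exact (add_sub_cancel Φ _).symm
  have hΦb : ∀ t, ‖Φ ^ t‖ ≤ L * α ^ t := fun t => by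
    rw [← opNorm_eq_norm]; exact hKpow t
  have hEb : ∀ j < k, ‖E (t' + 1 + j)‖ ≤ Δ := by
    intro j hj
    have h1t : 1 ≤ t' + 1 + j := by omega
    have htT : t' + 1 + j ≤ T := by omega
    have hA := hcloseA s (t' + 1 + j) h1t htT
    have hC := hcloseC s (t' + 1 + j - 1) (by omega)
    rw [opNorm_eq_norm] at hA hC hKnorm
    have hEeq : E (t' + 1 + j)
        = -((A - Af (proc.ξ (t' + 1 + j) s))
            - K * (C - Cf (proc.ξ (t' + 1 + j - 1) s))) := by
      rw [hEdef, hΦdef]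
      simp [Matrix.mul_sub]
      abel
    rw [hEeq, norm_neg]
    calc ‖(A - Af (proc.ξ (t' + 1 + j) s))
            - K * (C - Cf (proc.ξ (t' + 1 + j - 1) s))‖
        ≤ ‖A - Af (proc.ξ (t' + 1 + j) s)‖
            + ‖K * (C - Cf (proc.ξ (t' + 1 + j - 1) s))‖ := norm_sub_le _ _
      _ ≤ (Real.sqrt α - α) / L / 2 + ‖K‖ * ‖C - Cf (proc.ξ (t' + 1 + j - 1) s)‖ :=
          add_le_add hA (Matrix.l2_opNorm_mul _ _)
      _ ≤ (Real.sqrt α - α) / L / 2 + L * ((Real.sqrt α - α) / L / (2 * L)) := by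
          gcongr
      _ = Δ := by rw [hΔdef]; field_simp; ring
  have := mprod_bound Φ E (t' + 1) L α Δ hL hα0.le hΔ0 hΦb k hEb
  rw [← hfun] at this
  rw [opNorm_eq_norm]
  have hsq : Real.sqrt (α ^ k) = Real.sqrt α ^ k := by
    rw [show α ^ k = (Real.sqrt α ^ k) ^ 2 by
      rw [← pow_mul, mul_comm, pow_mul, Real.sq_sqrt hα0.le],
      Real.sqrt_sq (by positivity)]
  rw [hsq]
  have hβ : α + L * Δ = Real.sqrt α := by rw [hLΔ]; ring
  rwa [hβ] at this
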